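/- Let V ∈ ℂ^{n×k} have orthonormal columns, let V_c ∈ ℂ^{n×(n-k)} be such that [V, V_c] is unitary, and let Z ∈ ℂ^{(n-k)×k}. Define Ṽ = (V + V_c Z)(I_k + Zᴴ Z)^{-1/2}. Then ‖ṼṼᴴ − VVᴴ‖₂ = ‖Z‖₂ / √(1 + ‖Z‖₂²). -/

import Mathlib

set_option linter.unusedSectionVars false
set_option maxHeartbeats 1600000

open scoped Matrix.Norms.L2Operator ComplexOrder

section AuxHelpers

open Matrix

variable {k : Type*} [Fintype k] [DecidableEq k]

lemma aux_norm_sq {m : Type*} [Fintype m] [DecidableEq m] (A : Matrix m k ℂ) :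
    ‖A‖ ^ 2 = ‖Aᴴ * A‖ := by
  rw [l2_opNorm_conjTranspose_mul_self, sq]

lemma aux_strip_left {m l : Type*} [Fintype m] [DecidableEq m] [Fintype l] [DecidableEq l]
    (M : Matrix m k ℂ) (hM : Mᴴ * M = 1) (B : Matrix k l ℂ) :
    ‖M * B‖ = ‖B‖ := by
  rw [← pow_left_inj₀ (norm_nonneg _) (norm_nonneg _) (two_ne_zero (α := ℕ))]
  rw [aux_norm_sq, aux_norm_sq, conjTranspose_mul, Matrix.mul_assoc Bᴴ Mᴴ (M * B),
    ← Matrix.mul_assoc Mᴴ M B, hM, Matrix.one_mul]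

lemma aux_strip_right {m l : Type*} [Fintype m] [DecidableEq m] [Fintype l] [DecidableEq l]
    (M : Matrix m k ℂ) (hM : Mᴴ * M = 1) (B : Matrix l k ℂ) :
    ‖B * Mᴴ‖ = ‖B‖ := by
  rw [← l2_opNorm_conjTranspose (B * Mᴴ), conjTranspose_mul, conjTranspose_conjTranspose,
    aux_strip_left M hM, l2_opNorm_conjTranspose]

lemma aux_norm_one_le : ‖(1 : Matrix k k ℂ)‖ ≤ 1 := by
  have h := aux_norm_sq (1 : Matrix k k ℂ)
  rw [conjTranspose_one, one_mul] at h
  nlinarith [norm_nonneg (1 : Matrix k k ℂ)]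

lemma aux_diag_le (v : k → ℂ) {c : ℝ} (hc : 0 ≤ c) (h : ∀ i, ‖v i‖ ≤ c) :
    ‖diagonal v‖ ≤ c := by
  rw [Matrix.l2_opNorm_def]
  refine ContinuousLinearMap.opNorm_le_bound _ hc fun x => ?_
  have hx : ((toEuclideanLin.trans LinearMap.toContinuousLinearMap) (diagonal v)) x
      = (WithLp.equiv 2 (k → ℂ)).symm (diagonal v *ᵥ (WithLp.equiv 2 (k → ℂ)) x) := rfl
  rw [hx, EuclideanSpace.norm_eq]
  have hxn : ‖x‖ = Real.sqrt (∑ i, ‖x i‖ ^ 2) := EuclideanSpace.norm_eq x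
  rw [hxn, ← Real.sqrt_sq hc, ← Real.sqrt_mul (sq_nonneg c)]
  apply Real.sqrt_le_sqrt
  rw [Finset.mul_sum]
  apply Finset.sum_le_sum
  intro i _
  have : ((WithLp.equiv 2 (k → ℂ)).symm (diagonal v *ᵥ (WithLp.equiv 2 (k → ℂ)) x)) i
      = v i * x i := by
    simp [Matrix.mulVec_diagonal]
  rw [this, norm_mul, mul_pow]
  have h1 : ‖v i‖ ^ 2 ≤ c ^ 2 := by
    have := h i; nlinarith [norm_nonneg (v i)]
  nlinarith [sq_nonneg ‖x i‖, norm_nonneg (x i)]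

lemma aux_diag_ge (v : k → ℂ) (i : k) : ‖v i‖ ≤ ‖diagonal v‖ := by
  have hle := Matrix.l2_opNorm_mulVec (diagonal v) (EuclideanSpace.single i 1)
  have e1 : (EuclideanSpace.equiv k ℂ).symm (diagonal v *ᵥ (EuclideanSpace.single i 1))
      = EuclideanSpace.single i (v i) := by
    apply PiLp.ext
    intro j
    by_cases h : j = i <;>
      simp [h, Matrix.mulVec_diagonal, EuclideanSpace.single_apply]
  rw [e1, EuclideanSpace.norm_single, EuclideanSpace.norm_single, norm_one, mul_one] at hle
  exact hle

lemma aux_orth_sum_le {E F : Matrix k k ℂ} (hE : Eᴴ = E) (hF : Fᴴ = F)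
    (hEF : E * F = 0) (hFE : F * E = 0) {c : ℝ} (hc : 0 ≤ c)
    (hEc : ‖E‖ ≤ c) (hFc : ‖F‖ ≤ c) : ‖E + F‖ ≤ c := by
  have hprod : ∀ a b : ℕ, E ^ (a + 1) * F ^ (b + 1) = 0 := by
    intro a b
    calc E ^ (a + 1) * F ^ (b + 1) = E ^ a * (E * F) * F ^ b := by
          rw [pow_succ, pow_succ']; simp only [Matrix.mul_assoc]
      _ = 0 := by rw [hEF, mul_zero, zero_mul]
  have hprod' : ∀ a b : ℕ, F ^ (a + 1) * E ^ (b + 1) = 0 := by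
    intro a b
    calc F ^ (a + 1) * E ^ (b + 1) = F ^ a * (F * E) * E ^ b := by
          rw [pow_succ, pow_succ']; simp only [Matrix.mul_assoc]
      _ = 0 := by rw [hFE, mul_zero, zero_mul]
  have hsum : ∀ j : ℕ, (E + F) ^ (2 ^ j) = E ^ (2 ^ j) + F ^ (2 ^ j) := by
    intro j
    induction j with
    | zero => simp
    | succ j ih =>
      have h2 : (2 : ℕ) ^ (j + 1) = 2 ^ j * 2 := by ring
      obtain ⟨N, hN⟩ : ∃ N : ℕ, 2 ^ j = N + 1 :=
        ⟨2 ^ j - 1, (Nat.succ_pred_eq_of_pos (Nat.pow_pos (n := j) (by norm_num))).symm⟩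
      rw [h2, pow_mul, pow_mul, pow_mul, ih]
      have : (E ^ 2 ^ j + F ^ 2 ^ j) ^ 2
          = E ^ 2 ^ j * E ^ 2 ^ j + (E ^ 2 ^ j * F ^ 2 ^ j + F ^ 2 ^ j * E ^ 2 ^ j)
            + F ^ 2 ^ j * F ^ 2 ^ j := by
        rw [sq, add_mul, mul_add, mul_add]; abel
      rw [this, hN, hprod, hprod', sq, sq]
      simp
  have hsa : _root_.IsSelfAdjoint (E + F) := by
    simp only [_root_.IsSelfAdjoint, star_add, Matrix.star_eq_conjTranspose, hE, hF]
  have key : ∀ j : ℕ, ‖E + F‖ ^ (2 ^ j) ≤ 2 * c ^ (2 ^ j) := by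
    intro j
    have h1 : ‖(E + F) ^ (2 ^ j)‖ = ‖E + F‖ ^ (2 ^ j) := by
      have := hsa.nnnorm_pow_two_pow (E := Matrix k k ℂ) j
      have h2 := congrArg (fun x : NNReal => (x : ℝ)) this
      simpa using h2
    have hpos : 0 < 2 ^ j := Nat.pow_pos (n := j) (by norm_num)
    calc ‖E + F‖ ^ (2 ^ j) = ‖(E + F) ^ (2 ^ j)‖ := h1.symm
      _ = ‖E ^ (2 ^ j) + F ^ (2 ^ j)‖ := by rw [hsum]
      _ ≤ ‖E ^ (2 ^ j)‖ + ‖F ^ (2 ^ j)‖ := norm_add_le _ _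
      _ ≤ ‖E‖ ^ (2 ^ j) + ‖F‖ ^ (2 ^ j) := by
          gcongr <;> exact norm_pow_le' _ hpos
      _ ≤ c ^ (2 ^ j) + c ^ (2 ^ j) := by
          gcongr <;> first | exact norm_nonneg _ | assumption
      _ = 2 * c ^ (2 ^ j) := by ring
  by_contra hlt
  push_neg at hlt
  have hx0 : 0 < ‖E + F‖ := lt_of_le_of_lt hc hlt
  rcases eq_or_lt_of_le hc with hc0 | hcpos
  · have hk := key 0
    simp [← hc0] at hk
    rw [hk] at hx0
    simp at hx0
  · set x := ‖E + F‖ with hxdef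
    have hratio : 1 < x / c := (one_lt_div hcpos).mpr hlt
    obtain ⟨N, hN⟩ := pow_unbounded_of_one_lt (2 : ℝ) hratio
    have h2N : (x / c) ^ N ≤ (x / c) ^ (2 ^ N) :=
      pow_le_pow_right₀ (le_of_lt hratio) (le_of_lt (Nat.lt_two_pow_self (n := N)))
    have hkey : (x / c) ^ (2 ^ N) ≤ 2 := by
      have := key N
      rw [div_pow, div_le_iff₀ (pow_pos hcpos _)]
      linarith [this]
    linarith

lemma aux_psd_norm [Nonempty k] (A : Matrix k k ℂ) (hA : A.PosSemidef) :
    ‖A * (1 + A)⁻¹‖ = ‖A‖ / (1 + ‖A‖) := by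
  have hH := hA.1
  set d := hH.eigenvalues with hd
  set U := (hH.eigenvectorUnitary : Matrix k k ℂ) with hUdef
  have hU1 : Uᴴ * U = 1 := by
    rw [← Matrix.star_eq_conjTranspose]
    exact Unitary.coe_star_mul_self hH.eigenvectorUnitary
  have hU2 : U * Uᴴ = 1 := by
    rw [← Matrix.star_eq_conjTranspose]
    exact Unitary.coe_mul_star_self hH.eigenvectorUnitary
  have spec : A = U * diagonal (fun i => (d i : ℂ)) * Uᴴ := by
    have := hH.spectral_theorem
    rw [← Matrix.star_eq_conjTranspose]
    exact this
  have dnn : ∀ i, 0 ≤ d i := fun i => hA.eigenvalues_nonneg i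
  have hpos : ∀ i, (0:ℝ) < 1 + d i := fun i => by linarith [dnn i]
  have hone : (1 : Matrix k k ℂ) = U * diagonal (fun _ => (1:ℂ)) * Uᴴ := by
    rw [Matrix.diagonal_one, Matrix.mul_one, hU2]
  have hsum : 1 + A = U * diagonal (fun i => (1 + d i : ℂ)) * Uᴴ := by
    rw [spec]
    nth_rewrite 1 [hone]
    rw [← Matrix.add_mul, ← Matrix.mul_add, Matrix.diagonal_add]
  have hinv : (1 + A)⁻¹ = U * diagonal (fun i => ((1 + d i : ℂ))⁻¹) * Uᴴ := by
    apply Matrix.inv_eq_right_inv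
    rw [hsum]
    calc U * diagonal (fun i => (1 + d i : ℂ)) * Uᴴ *
          (U * diagonal (fun i => ((1 + d i : ℂ))⁻¹) * Uᴴ)
        = U * diagonal (fun i => (1 + d i : ℂ)) * (Uᴴ * U)
            * diagonal (fun i => ((1 + d i : ℂ))⁻¹) * Uᴴ := by
          simp only [Matrix.mul_assoc]
      _ = U * (diagonal (fun i => (1 + d i : ℂ)) * diagonal (fun i => ((1 + d i : ℂ))⁻¹)) * Uᴴ := by
          rw [hU1, Matrix.mul_one]; simp only [Matrix.mul_assoc]
      _ = 1 := by
          rw [Matrix.diagonal_mul_diagonal]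
          have : (fun i => (1 + d i : ℂ) * ((1 + d i : ℂ))⁻¹) = fun _ => (1:ℂ) := by
            funext i
            refine mul_inv_cancel₀ (fun hcon => ?_)
            have : (1 + d i : ℝ) = 0 := by exact_mod_cast hcon
            linarith [hpos i]
          rw [this, Matrix.diagonal_one, Matrix.mul_one, hU2]
  have hprod : A * (1 + A)⁻¹ = U * diagonal (fun i => (d i : ℂ) * ((1 + d i : ℂ))⁻¹) * Uᴴ := by
    rw [hinv, spec]
    calc U * diagonal (fun i => (d i : ℂ)) * Uᴴ * (U * diagonal (fun i => ((1 + d i : ℂ))⁻¹) * Uᴴ)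
        = U * diagonal (fun i => (d i : ℂ)) * (Uᴴ * U) * diagonal (fun i => ((1 + d i : ℂ))⁻¹)
            * Uᴴ := by simp only [Matrix.mul_assoc]
      _ = U * (diagonal (fun i => (d i : ℂ)) * diagonal (fun i => ((1 + d i : ℂ))⁻¹)) * Uᴴ := by
          rw [hU1, Matrix.mul_one]; simp only [Matrix.mul_assoc]
      _ = U * diagonal (fun i => (d i : ℂ) * ((1 + d i : ℂ))⁻¹) * Uᴴ := by
          rw [Matrix.diagonal_mul_diagonal]
  obtain ⟨i₀, -, hmax⟩ := Finset.exists_max_image (Finset.univ : Finset k) d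
    ⟨Classical.arbitrary k, Finset.mem_univ _⟩
  have hnormA : ‖A‖ = d i₀ := by
    rw [spec, Matrix.mul_assoc, aux_strip_left U hU1, aux_strip_right U hU1]
    apply le_antisymm
    · apply aux_diag_le _ (dnn i₀)
      intro i
      rw [Complex.norm_real, Real.norm_eq_abs, abs_of_nonneg (dnn i)]
      exact hmax i (Finset.mem_univ i)
    · have := aux_diag_ge (fun i => (d i : ℂ)) i₀
      rwa [Complex.norm_real, Real.norm_eq_abs, abs_of_nonneg (dnn i₀)] at this
  have hmono : ∀ i, d i / (1 + d i) ≤ d i₀ / (1 + d i₀) := by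
    intro i
    rw [div_le_div_iff₀ (hpos i) (hpos i₀)]
    have h1 := hmax i (Finset.mem_univ i)
    nlinarith [dnn i, dnn i₀]
  have hentry : ∀ i, ‖(d i : ℂ) * ((1 + d i : ℂ))⁻¹‖ = d i / (1 + d i) := by
    intro i
    have h1 : ((1:ℂ) + (d i : ℂ)) = ((1 + d i : ℝ) : ℂ) := by push_cast; ring
    rw [norm_mul, h1, norm_inv, Complex.norm_real, Complex.norm_real, Real.norm_eq_abs,
      Real.norm_eq_abs, abs_of_nonneg (dnn i), abs_of_nonneg (le_of_lt (hpos i)),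
      div_eq_mul_inv]
  have hnormP : ‖A * (1 + A)⁻¹‖ = d i₀ / (1 + d i₀) := by
    rw [hprod, Matrix.mul_assoc, aux_strip_left U hU1, aux_strip_right U hU1]
    apply le_antisymm
    · apply aux_diag_le _ (div_nonneg (dnn i₀) (hpos i₀).le)
      · intro i; rw [hentry i]; exact hmono i
    · have := aux_diag_ge (fun i => (d i : ℂ) * ((1 + d i : ℂ))⁻¹) i₀
      rwa [hentry i₀] at this
  rw [hnormP, hnormA]

end AuxHelpers


open scoped Matrix.Norms.L2Operator ComplexOrder

open Matrix in
/-- let `V` have orthonormal columns, `[V, Vc]` be unitary (so `Vcᴴ V = 0`,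
`Vcᴴ Vc = I` and `V Vᴴ + Vc Vcᴴ = I`), `Z` a parameter matrix, and let `S` be the (Hermitian
positive definite) square root of `I + Zᴴ Z`. With `Ṽ = (V + Vc Z) S⁻¹` we have
`‖Ṽ Ṽᴴ - V Vᴴ‖₂ = ‖Z‖₂ / √(1 + ‖Z‖₂²)` in the spectral norm. -/
theorem stmt0 {n k p : Type*} [Fintype n] [Fintype k] [Fintype p]
    [DecidableEq n] [DecidableEq k] [DecidableEq p]
    (V : Matrix n k ℂ) (Vc : Matrix n p ℂ) (Z : Matrix p k ℂ)
    (hV : Vᴴ * V = 1) (hVc : Vcᴴ * Vc = 1) (hVcV : Vcᴴ * V = 0)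
    (hunit : V * Vᴴ + Vc * Vcᴴ = 1)
    (S : Matrix k k ℂ) (hS : S.PosDef) (hSsq : S * S = 1 + Zᴴ * Z)
    (Vt : Matrix n k ℂ) (hVt : Vt = (V + Vc * Z) * S⁻¹) :
    ‖Vt * Vtᴴ - V * Vᴴ‖ = ‖Z‖ / Real.sqrt (1 + ‖Z‖ ^ 2) := by
  rcases isEmpty_or_nonempty k with hk | hk
  · have hZ : Z = 0 := Subsingleton.elim _ _
    have hD : Vt * Vtᴴ - V * Vᴴ = 0 := by
      ext i j
      simp [Matrix.mul_apply, Finset.univ_eq_empty]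
    rw [hD, hZ]
    simp
  -- main case
  have hVVc : Vᴴ * Vc = 0 := by
    have := congrArg conjTranspose hVcV
    simpa [conjTranspose_mul] using this
  have hdet : IsUnit S.det := (Matrix.isUnit_iff_isUnit_det S).mp hS.isUnit
  have hSinv1 : S * S⁻¹ = 1 := Matrix.mul_nonsing_inv S hdet
  have hSinv2 : S⁻¹ * S = 1 := Matrix.nonsing_inv_mul S hdet
  have hSiH : (S⁻¹)ᴴ = S⁻¹ := hS.1.inv
  set A := Zᴴ * Z with hAdef
  have hA : A.PosSemidef := Matrix.posSemidef_conjTranspose_mul_self Z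
  have hinvSS : S⁻¹ * S⁻¹ = (1 + A)⁻¹ := by
    rw [← hSsq, Matrix.mul_inv_rev]
  have expand : (V + Vc * Z)ᴴ * (V + Vc * Z) = 1 + A := by
    rw [conjTranspose_add, conjTranspose_mul, Matrix.add_mul, Matrix.mul_add, Matrix.mul_add,
      hV]
    rw [← Matrix.mul_assoc Vᴴ Vc Z, hVVc, Matrix.zero_mul]
    rw [Matrix.mul_assoc Zᴴ Vcᴴ V, hVcV, Matrix.mul_zero]
    rw [Matrix.mul_assoc Zᴴ Vcᴴ (Vc * Z), ← Matrix.mul_assoc Vcᴴ Vc Z, hVc, Matrix.one_mul]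
    rw [add_zero, zero_add]
  have hVtV : Vtᴴ * Vt = 1 := by
    rw [hVt, conjTranspose_mul, hSiH]
    calc S⁻¹ * (V + Vc * Z)ᴴ * ((V + Vc * Z) * S⁻¹)
        = S⁻¹ * ((V + Vc * Z)ᴴ * (V + Vc * Z)) * S⁻¹ := by simp only [Matrix.mul_assoc]
      _ = S⁻¹ * (S * S) * S⁻¹ := by rw [expand, hSsq]
      _ = 1 := by
          rw [← Matrix.mul_assoc, hSinv2, Matrix.one_mul, hSinv1]
  have hVVt : Vᴴ * Vt = S⁻¹ := by
    rw [hVt, ← Matrix.mul_assoc, Matrix.mul_add, hV, ← Matrix.mul_assoc Vᴴ Vc Z, hVVc,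
      Matrix.zero_mul, add_zero, Matrix.one_mul]
  have hVcVt : Vcᴴ * Vt = Z * S⁻¹ := by
    rw [hVt, ← Matrix.mul_assoc, Matrix.mul_add, hVcV, ← Matrix.mul_assoc Vcᴴ Vc Z, hVc,
      Matrix.one_mul, zero_add]
  -- projections
  set P := Vt * Vtᴴ with hPdef
  set Q := V * Vᴴ with hQdef
  set R := Vc * Vcᴴ with hRdef
  have hQR : Q + R = 1 := hunit
  have hP2 : P * P = P := by
    rw [hPdef, Matrix.mul_assoc, ← Matrix.mul_assoc Vtᴴ Vt Vtᴴ, hVtV, Matrix.one_mul]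
  have hQ2 : Q * Q = Q := by
    rw [hQdef, Matrix.mul_assoc, ← Matrix.mul_assoc Vᴴ V Vᴴ, hV, Matrix.one_mul]
  have hR2 : R * R = R := by
    rw [hRdef, Matrix.mul_assoc, ← Matrix.mul_assoc Vcᴴ Vc Vcᴴ, hVc, Matrix.one_mul]
  have hRQ : R * Q = 0 := by
    rw [hRdef, hQdef, Matrix.mul_assoc, ← Matrix.mul_assoc Vcᴴ V Vᴴ, hVcV, Matrix.zero_mul,
      Matrix.mul_zero]
  have hQR0 : Q * R = 0 := by
    rw [hRdef, hQdef, Matrix.mul_assoc, ← Matrix.mul_assoc Vᴴ Vc Vcᴴ, hVVc, Matrix.zero_mul,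
      Matrix.mul_zero]
  have hPH : Pᴴ = P := by rw [hPdef, conjTranspose_mul, conjTranspose_conjTranspose]
  have hQH : Qᴴ = Q := by rw [hQdef, conjTranspose_mul, conjTranspose_conjTranspose]
  have hRH : Rᴴ = R := by rw [hRdef, conjTranspose_mul, conjTranspose_conjTranspose]
  set D := P - Q with hDdef
  set X := P * R with hXdef
  set Y := Q - P * Q with hYdef
  have hDXY : D = X - Y := by
    have hPR : P * (Q + R) = P := by rw [hQR, Matrix.mul_one]
    rw [Matrix.mul_add] at hPR
    have h' : P * R = P - P * Q := by
      have := hPR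
      rw [add_comm] at this
      exact eq_sub_of_add_eq this
    rw [hDdef, hXdef, hYdef, h']
    abel
  have hXY : X * Yᴴ = 0 := by
    rw [hXdef, hYdef, conjTranspose_sub, hQH, conjTranspose_mul, hPH, hQH]
    rw [Matrix.mul_sub, Matrix.mul_assoc P R Q, hRQ, Matrix.mul_zero,
      ← Matrix.mul_assoc (P * R) Q P, Matrix.mul_assoc P R Q, hRQ, Matrix.mul_zero,
      Matrix.zero_mul, sub_zero]
  have hYX : Y * Xᴴ = 0 := by
    have := congrArg conjTranspose hXY
    rwa [conjTranspose_mul, conjTranspose_conjTranspose, conjTranspose_zero] at this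
  have hXconj : Xᴴ = R * P := by rw [hXdef, conjTranspose_mul, hPH, hRH]
  have hXtY : Xᴴ * Y = 0 := by
    rw [hXconj, hYdef, Matrix.mul_sub]
    have e1 : R * P * (P * Q) = R * P * Q := by
      rw [Matrix.mul_assoc R P (P * Q), ← Matrix.mul_assoc P P Q, hP2, ← Matrix.mul_assoc]
    rw [e1, Matrix.mul_assoc, sub_self]
  have hYtX : Yᴴ * X = 0 := by
    have := congrArg conjTranspose hXtY
    rwa [conjTranspose_mul, conjTranspose_conjTranspose, conjTranspose_zero] at this
  set E := Xᴴ * X with hEdef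
  set F := Yᴴ * Y with hFdef
  have hDD : Dᴴ * D = E + F := by
    have h1 : (X - Y)ᴴ * (X - Y) = Xᴴ * X - Xᴴ * Y - (Yᴴ * X - Yᴴ * Y) := by
      rw [conjTranspose_sub]
      noncomm_ring
    rw [hDXY, h1, hXtY, hYtX, hEdef, hFdef]
    abel
  have hEH : Eᴴ = E := by rw [hEdef, conjTranspose_mul, conjTranspose_conjTranspose]
  have hFH : Fᴴ = F := by rw [hFdef, conjTranspose_mul, conjTranspose_conjTranspose]
  have hEF : E * F = 0 := by
    rw [hEdef, hFdef, Matrix.mul_assoc Xᴴ X (Yᴴ * Y), ← Matrix.mul_assoc X Yᴴ Y, hXY,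
      Matrix.zero_mul, Matrix.mul_zero]
  have hFE : F * E = 0 := by
    rw [hEdef, hFdef, Matrix.mul_assoc Yᴴ Y (Xᴴ * X), ← Matrix.mul_assoc Y Xᴴ X, hYX,
      Matrix.zero_mul, Matrix.mul_zero]
  -- commutation of S⁻¹ with A
  have hcomm : S⁻¹ * A = A * S⁻¹ := by
    have hA' : A = S * S - 1 := by rw [hSsq]; abel
    rw [hA', Matrix.mul_sub, Matrix.sub_mul, Matrix.mul_one, Matrix.one_mul,
      ← Matrix.mul_assoc, hSinv2, Matrix.one_mul, Matrix.mul_assoc, hSinv1, Matrix.mul_one]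
  -- norm of E
  set m := ‖A * (1 + A)⁻¹‖ with hmdef
  have hEval : ‖E‖ = m := by
    have hXform : X = Vt * ((Vtᴴ * Vc) * Vcᴴ) := by
      rw [hXdef, hPdef, hRdef]; simp only [Matrix.mul_assoc]
    have hXnorm : ‖X‖ ^ 2 = ‖E‖ := aux_norm_sq X
    have hVtVc : Vtᴴ * Vc = S⁻¹ * Zᴴ := by
      have := congrArg conjTranspose hVcVt
      rwa [conjTranspose_mul, conjTranspose_mul, conjTranspose_conjTranspose, hSiH] at this
    have hXnorm2 : ‖X‖ = ‖S⁻¹ * Zᴴ‖ := by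
      rw [hXform, aux_strip_left Vt hVtV, aux_strip_right Vc hVc, hVtVc]
    have h1 : ‖S⁻¹ * Zᴴ‖ ^ 2 = m := by
      have e0 : ‖S⁻¹ * Zᴴ‖ = ‖Z * S⁻¹‖ := by
        rw [← l2_opNorm_conjTranspose (S⁻¹ * Zᴴ), conjTranspose_mul, hSiH,
          conjTranspose_conjTranspose]
      rw [e0, aux_norm_sq (Z * S⁻¹)]
      have h3 : (Z * S⁻¹)ᴴ * (Z * S⁻¹) = S⁻¹ * A * S⁻¹ := by
        rw [conjTranspose_mul, hSiH, hAdef]; simp only [Matrix.mul_assoc]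
      rw [h3, hcomm, Matrix.mul_assoc, hinvSS, hmdef]
    rw [← hXnorm, hXnorm2, h1]
  -- invertibility of 1 + A
  have hdet1A : IsUnit (1 + A).det := by
    rw [← hSsq, Matrix.det_mul]
    exact hdet.mul hdet
  have h1Ainv : (1 + A) * (1 + A)⁻¹ = 1 := Matrix.mul_nonsing_inv _ hdet1A
  have hsub : (1 : Matrix k k ℂ) - (1 + A)⁻¹ = A * (1 + A)⁻¹ := by
    have : (1 : Matrix k k ℂ) - (1 + A)⁻¹ = (1 + A) * (1 + A)⁻¹ - 1 * (1 + A)⁻¹ := by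
      rw [h1Ainv, Matrix.one_mul]
    rw [this, ← Matrix.sub_mul]
    congr 1
    abel
  -- norm of F
  have hYconj : Yᴴ = Q - Q * P := by
    rw [hYdef, conjTranspose_sub, hQH, conjTranspose_mul, hPH, hQH]
  have hF0 : F = Q - Q * (P * Q) := by
    rw [hFdef, hYconj, hYdef, Matrix.sub_mul, Matrix.mul_sub, Matrix.mul_sub, hQ2]
    have e1 : Q * P * (P * Q) = Q * (P * Q) := by
      rw [Matrix.mul_assoc Q P (P * Q), ← Matrix.mul_assoc P P Q, hP2]
    have e2 : Q * P * Q = Q * (P * Q) := by rw [Matrix.mul_assoc]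
    rw [e1, e2]
    abel
  have hVtVconj : Vtᴴ * V = S⁻¹ := by
    have := congrArg conjTranspose hVVt
    rwa [conjTranspose_mul, conjTranspose_conjTranspose, hSiH] at this
  have hQPQ : Q * (P * Q) = V * (S⁻¹ * S⁻¹) * Vᴴ := by
    rw [hQdef, hPdef]
    calc V * Vᴴ * (Vt * Vtᴴ * (V * Vᴴ))
        = V * ((Vᴴ * Vt) * ((Vtᴴ * V) * Vᴴ)) := by simp only [Matrix.mul_assoc]
      _ = V * (S⁻¹ * (S⁻¹ * Vᴴ)) := by rw [hVVt, hVtVconj]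
      _ = V * (S⁻¹ * S⁻¹) * Vᴴ := by simp only [Matrix.mul_assoc]
  have hFform : F = V * ((1 : Matrix k k ℂ) - S⁻¹ * S⁻¹) * Vᴴ := by
    have hr : V * ((1 : Matrix k k ℂ) - S⁻¹ * S⁻¹) * Vᴴ
        = V * (1 : Matrix k k ℂ) * Vᴴ - V * (S⁻¹ * S⁻¹) * Vᴴ := by
      rw [Matrix.mul_sub, Matrix.sub_mul]
    rw [hF0, hQPQ, hr, Matrix.mul_one]
  have hFval : ‖F‖ = m := by
    rw [hFform, aux_strip_right V hV, aux_strip_left V hV, hinvSS, hsub, hmdef]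
  have hm0 : 0 ≤ m := by rw [hmdef]; exact norm_nonneg _
  -- upper bound
  have hupper : ‖D‖ ^ 2 ≤ m := by
    rw [aux_norm_sq D, hDD]
    exact aux_orth_sum_le hEH hFH hEF hFE hm0 (le_of_eq hEval) (le_of_eq hFval)
  -- lower bound
  have hlower : m ≤ ‖D‖ ^ 2 := by
    have hXD : X = P * D * R := by
      rw [hDdef, Matrix.mul_sub, hP2, Matrix.sub_mul, hXdef, Matrix.mul_assoc P Q R, hQR0,
        Matrix.mul_zero, sub_zero]
    have hPle : ‖P‖ ≤ 1 := by
      have h1 : ‖P‖ = ‖Vtᴴ‖ ^ 2 := by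
        rw [aux_norm_sq Vtᴴ, conjTranspose_conjTranspose]
      have h2 : ‖Vtᴴ‖ ^ 2 = ‖(1 : Matrix k k ℂ)‖ := by
        rw [l2_opNorm_conjTranspose, aux_norm_sq Vt, hVtV]
      rw [h1, h2]
      exact aux_norm_one_le
    have hRle : ‖R‖ ≤ 1 := by
      have h1 : ‖R‖ = ‖Vcᴴ‖ ^ 2 := by
        rw [aux_norm_sq Vcᴴ, conjTranspose_conjTranspose]
      have h2 : ‖Vcᴴ‖ ^ 2 = ‖(1 : Matrix p p ℂ)‖ := by
        rw [l2_opNorm_conjTranspose, aux_norm_sq Vc, hVc]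
      rw [h1, h2]
      exact aux_norm_one_le
    have hXle : ‖X‖ ≤ ‖D‖ := by
      have s1 : ‖X‖ ≤ ‖P * D‖ * ‖R‖ := by rw [hXD]; exact Matrix.l2_opNorm_mul _ _
      have s2 : ‖P * D‖ ≤ ‖P‖ * ‖D‖ := Matrix.l2_opNorm_mul _ _
      nlinarith [norm_nonneg (P * D), norm_nonneg D, norm_nonneg P, norm_nonneg R,
        norm_nonneg X]
    have hXsq : ‖X‖ ^ 2 = m := by rw [aux_norm_sq X, ← hEdef, hEval]
    calc m = ‖X‖ ^ 2 := hXsq.symm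
      _ ≤ ‖D‖ ^ 2 := by nlinarith [norm_nonneg X, norm_nonneg D]
  have hDsq : ‖D‖ ^ 2 = m := le_antisymm hupper hlower
  -- final arithmetic
  have hnormA : ‖A‖ = ‖Z‖ ^ 2 := by rw [hAdef, ← aux_norm_sq Z]
  have hmval : m = ‖Z‖ ^ 2 / (1 + ‖Z‖ ^ 2) := by
    rw [hmdef, aux_psd_norm A hA, hnormA]
  have hden : (0:ℝ) < 1 + ‖Z‖ ^ 2 := by positivity
  have hfinal : ‖D‖ = ‖Z‖ / Real.sqrt (1 + ‖Z‖ ^ 2) := by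
    rw [← pow_left_inj₀ (norm_nonneg D) (by positivity) (two_ne_zero (α := ℕ))]
    rw [hDsq, hmval, div_pow, Real.sq_sqrt hden.le]
  exact hfinal
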